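/- Let P1, P2 be positive definite diagonal matrices and Q a symmetric positive definite matrix, and set W = -P1 Q P2 and M = (P1 Q P1)⁻¹. Then for every diagonal matrix D with nonnegative entries, M W D = -P1⁻¹ P2 D, and consequently the symmetric part of M(WD - I) is negative definite. -/

import Mathlib

open Matrix

/-- `X ≺ 0`: negative definiteness of a real matrix (`xᵀXx < 0` for all nonzero `x`). -/
def NegDef {n : ℕ} (X : Matrix (Fin n) (Fin n) ℝ) : Prop :=
  ∀ x : Fin n → ℝ, x ≠ 0 → x ⬝ᵥ X.mulVec x < 0

/-- If `P1, P2` are positive definite diagonal matrices, `Q` is symmetric positive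
definite, `W = -P1 Q P2` and `M = (P1 Q P1)⁻¹`, then for every diagonal `D ⪰ 0`,
`M W D = -P1⁻¹ P2 D`, and the symmetric part of `M(WD - I)` is negative definite. -/
theorem stmt8 {n : ℕ} (P1 P2 Q : Matrix (Fin n) (Fin n) ℝ)
    (hP1diag : P1.IsDiag) (hP1pos : ∀ i, 0 < P1 i i)
    (hP2diag : P2.IsDiag) (hP2pos : ∀ i, 0 < P2 i i)
    (hQ : Q.PosDef)
    (W M : Matrix (Fin n) (Fin n) ℝ)
    (hW : W = -(P1 * Q * P2)) (hM : M = (P1 * Q * P1)⁻¹) :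
    ∀ D : Matrix (Fin n) (Fin n) ℝ, D.IsDiag → (∀ i, 0 ≤ D i i) →
      M * W * D = -(P1⁻¹ * P2 * D) ∧
      NegDef ((1/2 : ℝ) • (M * (W * D - 1) + (M * (W * D - 1))ᵀ)) := by
  obtain ⟨p1, rfl⟩ : ∃ p, P1 = Matrix.diagonal p := ⟨P1.diag, hP1diag.diagonal_diag.symm⟩
  obtain ⟨p2, rfl⟩ : ∃ p, P2 = Matrix.diagonal p := ⟨P2.diag, hP2diag.diagonal_diag.symm⟩
  have hp1 : ∀ i, 0 < p1 i := fun i => by simpa using hP1pos i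
  have hp2 : ∀ i, 0 < p2 i := fun i => by simpa using hP2pos i
  have hP1pd : (Matrix.diagonal p1).PosDef := .diagonal hp1
  have hd1 : IsUnit (Matrix.diagonal p1).det := hP1pd.det_pos.ne'.isUnit
  have hdQ : IsUnit Q.det := hQ.det_pos.ne'.isUnit
  -- M * W = -(P1⁻¹ * P2)
  have key : M * W = -((Matrix.diagonal p1)⁻¹ * Matrix.diagonal p2) := by
    subst hM hW
    rw [Matrix.mul_inv_rev, Matrix.mul_inv_rev]
    simp only [Matrix.mul_neg, Matrix.mul_assoc, neg_inj]
    rw [Matrix.nonsing_inv_mul_cancel_left _ _ hd1, Matrix.nonsing_inv_mul_cancel_left _ _ hdQ]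
  -- P1 Q P1 is posdef, hence M is posdef
  have hP1QP1 : (Matrix.diagonal p1 * Q * Matrix.diagonal p1).PosDef := by
    refine Matrix.PosDef.of_dotProduct_mulVec_pos ?_ ?_
    · show _ᴴ = _
      rw [conjTranspose_mul, conjTranspose_mul, hQ.isHermitian.eq, diagonal_conjTranspose]
      simp [Matrix.mul_assoc, star_trivial]
    · intro x hx
      have hy : Matrix.diagonal p1 *ᵥ x ≠ 0 := by
        intro h
        apply hx
        funext i
        have := congrFun h i
        simp only [mulVec_diagonal, Pi.zero_apply] at this ⊢
        exact (mul_eq_zero.1 this).resolve_left (hp1 i).ne'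
      have hpos := hQ.dotProduct_mulVec_pos hy
      rw [star_trivial] at hpos ⊢
      have e : x ⬝ᵥ (Matrix.diagonal p1 * Q * Matrix.diagonal p1) *ᵥ x
          = (Matrix.diagonal p1 *ᵥ x) ⬝ᵥ Q *ᵥ (Matrix.diagonal p1 *ᵥ x) := by
        have h1 : x ᵥ* Matrix.diagonal p1 = Matrix.diagonal p1 *ᵥ x := by
          funext i; simp [Matrix.vecMul_diagonal, Matrix.mulVec_diagonal, mul_comm]
        rw [← Matrix.mulVec_mulVec, ← Matrix.mulVec_mulVec, Matrix.dotProduct_mulVec, h1]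
      rw [e]
      exact hpos
  have hMpd : M.PosDef := hM ▸ hP1QP1.inv
  intro D hD hDpos
  obtain ⟨d, rfl⟩ : ∃ v, D = Matrix.diagonal v := ⟨D.diag, hD.diagonal_diag.symm⟩
  have hd : ∀ i, 0 ≤ d i := fun i => by simpa using hDpos i
  have part1 : M * W * Matrix.diagonal d
      = -((Matrix.diagonal p1)⁻¹ * Matrix.diagonal p2 * Matrix.diagonal d) := by
    rw [key, Matrix.neg_mul]
  refine ⟨part1, ?_⟩
  intro x hx
  -- the quadratic form of the symmetrization equals the quadratic form of A
  set A := M * (W * Matrix.diagonal d - 1) with hA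
  have hsymval : x ⬝ᵥ Aᵀ *ᵥ x = x ⬝ᵥ A *ᵥ x := by
    rw [Matrix.mulVec_transpose, dotProduct_comm, ← Matrix.dotProduct_mulVec]
  have hval : x ⬝ᵥ ((1/2 : ℝ) • (A + Aᵀ)) *ᵥ x = x ⬝ᵥ A *ᵥ x := by
    rw [Matrix.smul_mulVec, dotProduct_smul, Matrix.add_mulVec, dotProduct_add, hsymval]
    ring_nf
  rw [hval]
  have hAeq : A = -((Matrix.diagonal p1)⁻¹ * Matrix.diagonal p2 * Matrix.diagonal d) - M := by
    rw [hA, Matrix.mul_sub, Matrix.mul_one, ← Matrix.mul_assoc, part1]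
  rw [hAeq, Matrix.sub_mulVec, dotProduct_sub, Matrix.neg_mulVec, dotProduct_neg]
  have hMx : 0 < x ⬝ᵥ M *ᵥ x := by
    have := hMpd.dotProduct_mulVec_pos hx
    rwa [star_trivial] at this
  have hinv : (Matrix.diagonal p1)⁻¹ = Matrix.diagonal (fun i => (p1 i)⁻¹) := by
    apply Matrix.inv_eq_right_inv
    rw [Matrix.diagonal_mul_diagonal]
    ext i j
    rcases eq_or_ne i j with h | h
    · subst h; simp [mul_inv_cancel₀ (hp1 i).ne']
    · simp [Matrix.diagonal_apply_ne _ h, Matrix.one_apply_ne h]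
  have hdiag : 0 ≤ x ⬝ᵥ ((Matrix.diagonal p1)⁻¹ * Matrix.diagonal p2 * Matrix.diagonal d) *ᵥ x := by
    rw [hinv, Matrix.diagonal_mul_diagonal, Matrix.diagonal_mul_diagonal]
    rw [Matrix.dotProduct_mulVec]
    apply Finset.sum_nonneg
    intro i _
    simp only [Matrix.vecMul_diagonal, Pi.mul_apply]
    have h0 : (0:ℝ) ≤ (p1 i)⁻¹ * p2 i * d i :=
      mul_nonneg (mul_nonneg (inv_nonneg.2 (hp1 i).le) (hp2 i).le) (hd i)
    calc (0:ℝ) ≤ ((p1 i)⁻¹ * p2 i * d i) * (x i * x i) :=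
          mul_nonneg h0 (mul_self_nonneg _)
      _ = x i * ((p1 i)⁻¹ * p2 i * d i) * x i := by ring
  linarith
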